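/- In the wait-free model, the start time of gradient-sending for layer 1 satisfies κ_1 = max over j ∈ {1,...,N} of ( Σ_{k=j}^N b_k + Σ_{k=2}^j r_k ), i.e., the recursion κ_N = b_N, κ_j = max{Σ_{k=j}^N b_k, κ_{j+1} + r_{j+1}} admits this closed-form solution. -/

import Mathlib

lemma waitfree_kappa_aux (N : ℕ) (b r κ : ℕ → ℝ)
    (hκN : κ N = b N)
    (hκ : ∀ j, 1 ≤ j → j < N →
      κ j = max (∑ k ∈ Finset.Icc j N, b k) (κ (j + 1) + r (j + 1))) :
    ∀ d j (h1 : 1 ≤ j) (h2 : j ≤ N), N - j = d →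
      κ j = (Finset.Icc j N).sup' (Finset.nonempty_Icc.mpr h2)
        (fun i => (∑ k ∈ Finset.Icc i N, b k) + ∑ k ∈ Finset.Icc (j+1) i, r k) := by
  intro d
  induction d with
  | zero =>
    intro j h1 h2 hd
    have hjN : j = N := by omega
    subst hjN
    rw [hκN]
    have he : Finset.Icc (j+1) j = (∅ : Finset ℕ) := Finset.Icc_eq_empty (by omega)
    simp [Finset.Icc_self, he]
  | succ d ih =>
    intro j h1 h2 hd
    have hjN : j < N := by omega
    rw [hκ j h1 hjN]
    have h2' : j + 1 ≤ N := hjN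
    rw [ih (j+1) (by omega) h2' (by omega)]
    -- move the + r (j+1) inside the sup'
    have hne : (Finset.Icc (j+1) N).Nonempty := Finset.nonempty_Icc.mpr h2'
    have hadd : ((Finset.Icc (j+1) N).sup' hne
        (fun i => (∑ k ∈ Finset.Icc i N, b k) + ∑ k ∈ Finset.Icc (j+2) i, r k))
          + r (j+1)
        = (Finset.Icc (j+1) N).sup' hne
            (fun i => (∑ k ∈ Finset.Icc i N, b k) + ∑ k ∈ Finset.Icc (j+1) i, r k) := by
      rw [Finset.comp_sup'_eq_sup'_comp hne (· + r (j+1))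
        (fun x y => (max_add_add_right x y (r (j+1))).symm)]
      apply Finset.sup'_congr hne rfl
      intro i hi
      simp only [Finset.mem_Icc] at hi
      have : Finset.Icc (j+1) i = insert (j+1) (Finset.Icc (j+2) i) := by
        rw [← Finset.Ioc_insert_left hi.1, ← Finset.Icc_add_one_left_eq_Ioc]; rfl
      simp only [Function.comp]
      rw [this, Finset.sum_insert (by simp)]
      ring
    rw [hadd]
    have hsplit : Finset.Icc j N = insert j (Finset.Icc (j+1) N) := by
      rw [← Finset.Ioc_insert_left h2, ← Finset.Icc_add_one_left_eq_Ioc]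
    have he : Finset.Icc (j+1) j = (∅ : Finset ℕ) := Finset.Icc_eq_empty (by omega)
    have hnm : j ∉ Finset.Icc (j+1) N := by simp
    simp_rw [hsplit]
    rw [Finset.sup'_insert hne]
    rw [hsplit, Finset.sum_insert hnm, he, Finset.sum_empty, add_zero]

theorem waitfree_kappa_closed_form (N : ℕ) (hN : 1 ≤ N) (b r κ : ℕ → ℝ)
    (hb : ∀ j, 0 ≤ b j) (hr : ∀ j, 0 ≤ r j)
    (hκN : κ N = b N)
    (hκ : ∀ j, 1 ≤ j → j < N →
      κ j = max (∑ k ∈ Finset.Icc j N, b k) (κ (j + 1) + r (j + 1))) :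
    κ 1 = (Finset.Icc 1 N).sup' (Finset.nonempty_Icc.mpr hN)
      (fun j => (∑ k ∈ Finset.Icc j N, b k) + ∑ k ∈ Finset.Icc 2 j, r k) := by
  exact waitfree_kappa_aux N b r κ hκN hκ (N - 1) 1 le_rfl hN rfl
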